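/- Let α, C > 0 and let f : (0,1]² → ℝ be integrable and mixed α-Hölder with constant C with respect to the dyadic metrics. Then for all j, j' ∈ ℕ and all (x,x') ∈ (0,1]², the mixed martingale difference satisfies |(Δ_j Δ'_{j'} f)(x,x')| = |(P^{j+1}P'^{j'+1}f − P^{j}P'^{j'+1}f − P^{j+1}P'^{j'}f + P^{j}P'^{j'}f)(x,x')| ≤ C · 2^{-αj} · 2^{-αj'}. -/

import Mathlib

open MeasureTheory Set Filter

/-- The index `k` of the scale-`j` dyadic interval `(2^{-j} k, 2^{-j}(k+1)]` containing `x`. -/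
noncomputable def dyadicIndex (j : ℕ) (x : ℝ) : ℤ := ⌈(2:ℝ) ^ j * x⌉ - 1

/-- The scale-`j` dyadic interval `I^j_k = (2^{-j} k, 2^{-j}(k+1)]`. -/
noncomputable def dyadicInterval (j : ℕ) (k : ℤ) : Set ℝ :=
  Set.Ioc ((2:ℝ) ^ (-(j:ℤ)) * k) ((2:ℝ) ^ (-(j:ℤ)) * (k + 1))

/-- The dyadic averaging operator `P^j`:  `(P^j f)(x) = 2^j ∫_{I^j_k} f`, where `I^j_k` is the
scale-`j` dyadic interval containing `x`. -/
noncomputable def dyadicAvg (j : ℕ) (f : ℝ → ℝ) (x : ℝ) : ℝ :=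
  (2:ℝ) ^ j * ∫ t in dyadicInterval j (dyadicIndex j x), f t

/-- The dyadic metric on `(0,1]`:
`d(x,y) = inf { 2^{-j} : x and y lie in the same scale-j dyadic interval }` for `x ≠ y`,
and `d(x,x) = 0`. -/
noncomputable def dyadicDist (x y : ℝ) : ℝ :=
  if x = y then 0
  else sInf {r : ℝ | ∃ j : ℕ, r = (2:ℝ) ^ (-(j:ℤ)) ∧ dyadicIndex j x = dyadicIndex j y}

/-- `f` is `α`-Hölder with constant `C` on `(0,1]` with respect to the dyadic metric. -/
def HolderDyadic (α C : ℝ) (f : ℝ → ℝ) : Prop :=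
  ∀ x ∈ Set.Ioc (0:ℝ) 1, ∀ y ∈ Set.Ioc (0:ℝ) 1, |f x - f y| ≤ C * dyadicDist x y ^ α

/-- `g` is mixed `α`-Hölder with constant `C` on `(0,1]²` with respect to the dyadic metrics. -/
def MixedHolderDyadic (α C : ℝ) (g : ℝ → ℝ → ℝ) : Prop :=
  ∀ x ∈ Set.Ioc (0:ℝ) 1, ∀ y ∈ Set.Ioc (0:ℝ) 1, ∀ x' ∈ Set.Ioc (0:ℝ) 1, ∀ y' ∈ Set.Ioc (0:ℝ) 1,
    |g y x' - g x x'| ≤ C * dyadicDist x y ^ α ∧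
    |g x y' - g x x'| ≤ C * dyadicDist x' y' ^ α ∧
    |g y y' - g x y' - g y x' + g x x'| ≤ C * (dyadicDist x y ^ α * dyadicDist x' y' ^ α)

/-- Dyadic averaging at scale `j` in the first variable. -/
noncomputable def avgFst (j : ℕ) (g : ℝ → ℝ → ℝ) (x x' : ℝ) : ℝ := dyadicAvg j (fun t => g t x') x

/-- Dyadic averaging at scale `j'` in the second variable. -/
noncomputable def avgSnd (j' : ℕ) (g : ℝ → ℝ → ℝ) (x x' : ℝ) : ℝ := dyadicAvg j' (fun t => g x t) x'

/-- The double averaging operator `P^j P'^{j'}`. -/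
noncomputable def avg2 (j j' : ℕ) (g : ℝ → ℝ → ℝ) : ℝ → ℝ → ℝ := avgFst j (avgSnd j' g)

/-- The mixed martingale difference `Δ_j Δ'_{j'} g`. -/
noncomputable def mixedDiff (j j' : ℕ) (g : ℝ → ℝ → ℝ) (x x' : ℝ) : ℝ :=
  avg2 (j+1) (j'+1) g x x' - avg2 j (j'+1) g x x' - avg2 (j+1) j' g x x' + avg2 j j' g x x'

/-- `Δ_j P'^{j'} g`: martingale difference in the first variable, average in the second. -/
noncomputable def diffFstAvgSnd (j j' : ℕ) (g : ℝ → ℝ → ℝ) (x x' : ℝ) : ℝ :=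
  avg2 (j+1) j' g x x' - avg2 j j' g x x'

/-- `P^j Δ'_{j'} g`: average in the first variable, martingale difference in the second. -/
noncomputable def avgFstDiffSnd (j j' : ℕ) (g : ℝ → ℝ → ℝ) (x x' : ℝ) : ℝ :=
  avg2 j (j'+1) g x x' - avg2 j j' g x x'

/-- The (unnormalized) Haar function `ψ^j_k`: `+1` on the right half of `I^j_k`, `-1` on its
left half, `0` elsewhere. -/
noncomputable def haarFn (j : ℕ) (k : ℤ) (x : ℝ) : ℝ :=
  if x ∈ Set.Ioc ((2:ℝ) ^ (-(j:ℤ)) * k + (2:ℝ) ^ (-(j:ℤ) - 1)) ((2:ℝ) ^ (-(j:ℤ)) * (k + 1)) then 1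
  else if x ∈ Set.Ioc ((2:ℝ) ^ (-(j:ℤ)) * k) ((2:ℝ) ^ (-(j:ℤ)) * k + (2:ℝ) ^ (-(j:ℤ) - 1)) then -1
  else 0

lemma two_zpow_pos' (n : ℤ) : (0:ℝ) < 2 ^ n := zpow_pos (by norm_num) n

lemma mem_dyadicInterval_iff {j : ℕ} {k : ℤ} {t : ℝ} :
    t ∈ dyadicInterval j k ↔ dyadicIndex j t = k := by
  have hb : (0:ℝ) < 2 ^ j := by positivity
  have hbinv : (2:ℝ) ^ (-(j:ℤ)) = ((2:ℝ) ^ j)⁻¹ := by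
    rw [zpow_neg, zpow_natCast]
  have hbi : (2:ℝ) ^ j * ((2:ℝ)^j)⁻¹ = 1 := mul_inv_cancel₀ (ne_of_gt hb)
  constructor
  · rintro ⟨h1, h2⟩
    rw [hbinv] at h1 h2
    have hk1 : (k:ℝ) < 2 ^ j * t := by
      have := mul_lt_mul_of_pos_left h1 hb
      rwa [← mul_assoc, hbi, one_mul] at this
    have hk2 : (2:ℝ) ^ j * t ≤ k + 1 := by
      have := mul_le_mul_of_nonneg_left h2 hb.le
      rwa [← mul_assoc, hbi, one_mul] at this
    have : ⌈(2:ℝ)^j * t⌉ = k + 1 := by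
      rw [Int.ceil_eq_iff]
      constructor <;> push_cast <;> [linarith; linarith]
    simp [dyadicIndex, this]
  · intro h
    have h' : ⌈(2:ℝ)^j * t⌉ = k + 1 := by
      have := h; unfold dyadicIndex at this; omega
    have h1 : ((k:ℝ) + 1) - 1 < (2:ℝ)^j * t ∧ (2:ℝ)^j * t ≤ (k:ℝ) + 1 := by
      have := (Int.ceil_eq_iff (R := ℝ) (z := k+1)).1 h'
      push_cast at this; push_cast; exact this
    obtain ⟨h1, h2⟩ := h1
    rw [dyadicInterval, Set.mem_Ioc, hbinv]
    have hi : (0:ℝ) < ((2:ℝ)^j)⁻¹ := inv_pos.2 hb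
    have hbi' : ((2:ℝ)^j)⁻¹ * (2:ℝ)^j = 1 := inv_mul_cancel₀ (ne_of_gt hb)
    constructor
    · have := mul_lt_mul_of_pos_left (show (k:ℝ) < 2^j*t by linarith) hi
      rwa [← mul_assoc, hbi', one_mul] at this
    · have := mul_le_mul_of_nonneg_left h2 hi.le
      rwa [← mul_assoc, hbi', one_mul] at this

lemma self_mem_dyadicInterval {j : ℕ} (x : ℝ) : x ∈ dyadicInterval j (dyadicIndex j x) :=
  mem_dyadicInterval_iff.2 rfl

lemma dyadicInterval_nested {j : ℕ} {k k₁ : ℤ} {x : ℝ}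
    (hk : x ∈ dyadicInterval j k) (hk₁ : x ∈ dyadicInterval (j+1) k₁) :
    dyadicInterval (j+1) k₁ ⊆ dyadicInterval j k := by
  have hp : (0:ℝ) < 2 ^ (-(j:ℤ)-1) := two_zpow_pos' _
  have hsplit : (2:ℝ) ^ (-(j:ℤ)) = 2 * 2 ^ (-(j:ℤ)-1) := by
    rw [zpow_sub₀ (two_ne_zero : (2:ℝ) ≠ 0), zpow_one]; ring
  have he : (2:ℝ) ^ (-((j+1:ℕ):ℤ)) = 2 ^ (-(j:ℤ)-1) := by
    congr 1; push_cast; ring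
  obtain ⟨ha1, ha2⟩ := hk
  obtain ⟨hb1, hb2⟩ := hk₁
  simp only [dyadicInterval] at hb1 hb2 ⊢
  rw [he] at hb1 hb2 ⊢
  -- from intersection: 2k ≤ k₁ ≤ 2k+1
  have h1 : (2*k:ℝ) ≤ k₁ := by
    have : (2*k:ℝ) < k₁ + 1 := by
      rw [hsplit] at ha1
      nlinarith
    have : (2*k:ℤ) < k₁ + 1 := by exact_mod_cast (by push_cast; linarith : ((2*k:ℤ):ℝ) < ((k₁+1:ℤ):ℝ))
    exact_mod_cast (by omega : (2*k:ℤ) ≤ k₁)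
  have h2 : (k₁:ℝ) ≤ 2*k+1 := by
    have : (k₁:ℝ) < 2*k+2 := by
      rw [hsplit] at ha2
      nlinarith
    have : (k₁:ℤ) < 2*k+2 := by exact_mod_cast (by push_cast; linarith : ((k₁:ℤ):ℝ) < ((2*k+2:ℤ):ℝ))
    exact_mod_cast (by omega : (k₁:ℤ) ≤ 2*k+1)
  intro t ⟨ht1, ht2⟩
  constructor
  · calc (2:ℝ) ^ (-(j:ℤ)) * k = 2 ^ (-(j:ℤ)-1) * (2*k) := by rw [hsplit]; ring
    _ ≤ 2 ^ (-(j:ℤ)-1) * k₁ := by nlinarith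
    _ < t := ht1
  · calc t ≤ (2:ℝ) ^ (-(j:ℤ)-1) * (k₁+1) := ht2
    _ ≤ 2 ^ (-(j:ℤ)-1) * (2*k+2) := by nlinarith
    _ = 2 ^ (-(j:ℤ)) * (k+1) := by rw [hsplit]; ring

lemma dyadicInterval_subset_Ioc {j : ℕ} {x : ℝ} (hx : x ∈ Set.Ioc (0:ℝ) 1) :
    dyadicInterval j (dyadicIndex j x) ⊆ Set.Ioc (0:ℝ) 1 := by
  have hb : (0:ℝ) < 2 ^ j := by positivity
  have hp : (0:ℝ) < 2 ^ (-(j:ℤ)) := two_zpow_pos' _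
  have hbi : (2:ℝ) ^ (-(j:ℤ)) * 2 ^ j = 1 := by
    rw [← zpow_natCast (2:ℝ) j, ← zpow_add₀ (two_ne_zero)]; norm_num
  have hc1 : (1:ℤ) ≤ ⌈(2:ℝ) ^ j * x⌉ := by
    have : (0:ℝ) < 2 ^ j * x := mul_pos hb hx.1
    exact Int.ceil_pos.2 this
  have hc2 : ⌈(2:ℝ) ^ j * x⌉ ≤ (2:ℝ)^j := by
    have h := Int.ceil_le.2 (show (2:ℝ)^j * x ≤ ((2^j : ℕ) : ℝ) by push_cast; nlinarith [hx.2])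
    calc (⌈(2:ℝ)^j*x⌉ : ℝ) ≤ ((2^j : ℕ) : ℝ) := by exact_mod_cast h
      _ = (2:ℝ)^j := by push_cast; ring
  intro t ⟨ht1, ht2⟩
  have hk0 : (0:ℝ) ≤ (dyadicIndex j x : ℝ) := by
    unfold dyadicIndex; push_cast
    have : (1:ℝ) ≤ (⌈(2:ℝ)^j*x⌉ : ℝ) := by exact_mod_cast hc1
    linarith
  constructor
  · calc (0:ℝ) ≤ 2 ^ (-(j:ℤ)) * (dyadicIndex j x) := by positivity
    _ < t := ht1
  · calc t ≤ (2:ℝ) ^ (-(j:ℤ)) * (dyadicIndex j x + 1) := ht2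
    _ ≤ 2 ^ (-(j:ℤ)) * (2:ℝ)^j := by
        have : ((dyadicIndex j x : ℝ) + 1) ≤ (2:ℝ)^j := by
          unfold dyadicIndex; push_cast; linarith [hc2]
        nlinarith
    _ = 1 := hbi

lemma volume_dyadicInterval (j : ℕ) (k : ℤ) :
    volume (dyadicInterval j k) = ENNReal.ofReal ((2:ℝ) ^ (-(j:ℤ))) := by
  rw [dyadicInterval, Real.volume_Ioc]
  congr 1; ring

lemma dyadicDist_nonneg (t s : ℝ) : 0 ≤ dyadicDist t s := by
  unfold dyadicDist
  split_ifs with h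
  · exact le_rfl
  · exact Real.sInf_nonneg (by rintro r ⟨i, rfl, -⟩; positivity)

lemma dyadicDist_le {j : ℕ} {k : ℤ} {t s : ℝ}
    (ht : t ∈ dyadicInterval j k) (hs : s ∈ dyadicInterval j k) :
    dyadicDist t s ≤ (2:ℝ) ^ (-(j:ℤ)) := by
  unfold dyadicDist
  split_ifs with h
  · exact (two_zpow_pos' _).le
  · exact csInf_le ⟨0, by rintro r ⟨i, rfl, -⟩; positivity⟩
      ⟨j, rfl, by rw [mem_dyadicInterval_iff.1 ht, mem_dyadicInterval_iff.1 hs]⟩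

lemma oneDim {A B : Set ℝ} (hAm : MeasurableSet A) (hBm : MeasurableSet B) (hBA : B ⊆ A)
    {cA cB M : ℝ} (hcA0 : 0 ≤ cA) (hcB0 : 0 ≤ cB)
    (hAfin : volume A ≠ ⊤)
    (hcA : cA * (volume A).toReal = 1) (hcB : cB * (volume B).toReal = 1)
    {v : ℝ → ℝ} (hv : IntegrableOn v A)
    (hM : 0 ≤ M)
    (hbound : ∀ᵐ s ∂(volume.restrict A), ∀ᵐ t ∂(volume.restrict B), |v t - v s| ≤ M) :
    |cB * (∫ t in B, v t) - cA * ∫ s in A, v s| ≤ M := by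
  have hBfin : volume B ≠ ⊤ := fun h => hAfin (top_le_iff.1 (h ▸ measure_mono hBA))
  have hAlt : volume A < ⊤ := lt_top_iff_ne_top.2 hAfin
  have hBlt : volume B < ⊤ := lt_top_iff_ne_top.2 hBfin
  have hvB : IntegrableOn v B := hv.mono_set hBA
  set I : ℝ := cB * ∫ t in B, v t with hI
  have key : ∀ᵐ s ∂(volume.restrict A), |I - v s| ≤ M := by
    filter_upwards [hbound] with s hs
    have h1 : I - v s = cB * ∫ t in B, (v t - v s) := by
      rw [integral_sub hvB (integrableOn_const hBlt.ne), setIntegral_const,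
        smul_eq_mul, hI, Measure.real]
      linear_combination (v s) * hcB
    rw [h1, abs_mul, abs_of_nonneg hcB0]
    have h2 : |∫ t in B, (v t - v s)| ≤ M * (volume B).toReal := by
      have := norm_setIntegral_le_of_norm_le_const_ae' (μ := volume) (s := B) (C := M)
        (f := fun t => v t - v s) hBlt ?_
      · simpa [Real.norm_eq_abs, Measure.real] using this
      · rw [← ae_restrict_iff' hBm] at *
        filter_upwards [hs] with t ht
        simpa [Real.norm_eq_abs] using ht
    calc cB * |∫ t in B, (v t - v s)| ≤ cB * (M * (volume B).toReal) :=
          mul_le_mul_of_nonneg_left h2 hcB0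
      _ = M * (cB * (volume B).toReal) := by ring
      _ = M := by rw [hcB, mul_one]
  have h3 : I - cA * ∫ s in A, v s = cA * ∫ s in A, (I - v s) := by
    rw [integral_sub (integrableOn_const (C := I) hAlt.ne) hv, setIntegral_const,
      smul_eq_mul, hI, Measure.real]
    linear_combination (-(cB * ∫ t in B, v t)) * hcA
  have hgoal : cB * (∫ t in B, v t) - cA * ∫ s in A, v s = cA * ∫ s in A, (I - v s) := by
    rw [← h3, hI]
  rw [hgoal, abs_mul, abs_of_nonneg hcA0]
  have h4 : |∫ s in A, (I - v s)| ≤ M * (volume A).toReal := by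
    have := norm_setIntegral_le_of_norm_le_const_ae' (μ := volume) (s := A) (C := M)
      (f := fun s => I - v s) hAlt ?_
    · simpa [Real.norm_eq_abs, Measure.real] using this
    · rw [← ae_restrict_iff' hAm]
      filter_upwards [key] with s hs
      simpa [Real.norm_eq_abs, abs_sub_comm] using hs
  calc cA * |∫ s in A, (I - v s)| ≤ cA * (M * (volume A).toReal) :=
        mul_le_mul_of_nonneg_left h4 hcA0
    _ = M * (cA * (volume A).toReal) := by ring
    _ = M := by rw [hcA, mul_one]

lemma volume_dyadicInterval_toReal (j : ℕ) (k : ℤ) :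
    (volume (dyadicInterval j k)).toReal = (2:ℝ) ^ (-(j:ℤ)) := by
  rw [volume_dyadicInterval, ENNReal.toReal_ofReal (two_zpow_pos' _).le]

lemma volume_dyadicInterval_ne_top (j : ℕ) (k : ℤ) : volume (dyadicInterval j k) ≠ ⊤ := by
  rw [volume_dyadicInterval]; exact ENNReal.ofReal_ne_top

lemma two_pow_mul_volume (j : ℕ) (k : ℤ) :
    (2:ℝ) ^ j * (volume (dyadicInterval j k)).toReal = 1 := by
  rw [volume_dyadicInterval_toReal, ← zpow_natCast (2:ℝ) j,
    ← zpow_add₀ (two_ne_zero : (2:ℝ) ≠ 0)]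
  norm_num

lemma zpow_rpow_eq (n : ℕ) (α : ℝ) : ((2:ℝ) ^ (-(n:ℤ))) ^ α = (2:ℝ) ^ (-(α * (n:ℝ))) := by
  rw [← Real.rpow_intCast 2 (-(n:ℤ)), ← Real.rpow_mul (by norm_num : (0:ℝ) ≤ 2)]
  congr 1; push_cast; ring

theorem mixedDiff_bound_core
    (α C : ℝ) (hα : 0 < α) (hC : 0 < C)
    (f : ℝ → ℝ → ℝ)
    (hint : MeasureTheory.IntegrableOn (Function.uncurry f)
      (Set.Ioc (0:ℝ) 1 ×ˢ Set.Ioc (0:ℝ) 1))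
    (hf : MixedHolderDyadic α C f)
    (j j' : ℕ) (x x' : ℝ) (hx : x ∈ Set.Ioc (0:ℝ) 1) (hx' : x' ∈ Set.Ioc (0:ℝ) 1) :
    |mixedDiff j j' f x x'| ≤ C * ((2:ℝ) ^ (-(j:ℤ))) ^ α * ((2:ℝ) ^ (-(j':ℤ))) ^ α := by
  set A := dyadicInterval j (dyadicIndex j x) with hA
  set B := dyadicInterval (j+1) (dyadicIndex (j+1) x) with hB
  set A' := dyadicInterval j' (dyadicIndex j' x') with hA'
  set B' := dyadicInterval (j'+1) (dyadicIndex (j'+1) x') with hB'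
  have hxA : x ∈ A := self_mem_dyadicInterval x
  have hxB : x ∈ B := self_mem_dyadicInterval x
  have hBA : B ⊆ A := dyadicInterval_nested hxA hxB
  have hxA' : x' ∈ A' := self_mem_dyadicInterval x'
  have hxB' : x' ∈ B' := self_mem_dyadicInterval x'
  have hB'A' : B' ⊆ A' := dyadicInterval_nested hxA' hxB'
  have hA01 : A ⊆ Set.Ioc 0 1 := dyadicInterval_subset_Ioc hx
  have hA'01 : A' ⊆ Set.Ioc 0 1 := dyadicInterval_subset_Ioc hx'
  have hAm : MeasurableSet A := measurableSet_Ioc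
  have hBm : MeasurableSet B := measurableSet_Ioc
  have hA'm : MeasurableSet A' := measurableSet_Ioc
  have hB'm : MeasurableSet B' := measurableSet_Ioc
  set M := C * ((2:ℝ) ^ (-(j:ℤ))) ^ α * ((2:ℝ) ^ (-(j':ℤ))) ^ α with hM
  have hMnn : (0:ℝ) ≤ M := by
    have h1 : (0:ℝ) ≤ ((2:ℝ) ^ (-(j:ℤ))) ^ α := Real.rpow_nonneg (two_zpow_pos' _).le _
    have h2 : (0:ℝ) ≤ ((2:ℝ) ^ (-(j':ℤ))) ^ α := Real.rpow_nonneg (two_zpow_pos' _).le _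
    rw [hM]; positivity
  -- second difference bound
  have hsecond : ∀ s ∈ A, ∀ t ∈ A, ∀ s' ∈ A', ∀ t' ∈ A',
      |f t t' - f s t' - f t s' + f s s'| ≤ M := by
    intro s hs t ht s' hs' t' ht'
    have h := (hf s (hA01 hs) t (hA01 ht) s' (hA'01 hs') t' (hA'01 ht')).2.2
    have d1 : dyadicDist s t ^ α ≤ ((2:ℝ) ^ (-(j:ℤ))) ^ α :=
      Real.rpow_le_rpow (dyadicDist_nonneg _ _) (dyadicDist_le hs ht) hα.le
    have d2 : dyadicDist s' t' ^ α ≤ ((2:ℝ) ^ (-(j':ℤ))) ^ α :=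
      Real.rpow_le_rpow (dyadicDist_nonneg _ _) (dyadicDist_le hs' ht') hα.le
    have hn1 : (0:ℝ) ≤ dyadicDist s t ^ α := Real.rpow_nonneg (dyadicDist_nonneg _ _) _
    have hn2 : (0:ℝ) ≤ dyadicDist s' t' ^ α := Real.rpow_nonneg (dyadicDist_nonneg _ _) _
    have hn3 : (0:ℝ) ≤ ((2:ℝ) ^ (-(j:ℤ))) ^ α := Real.rpow_nonneg (two_zpow_pos' _).le _
    refine h.trans ?_
    have hmul : dyadicDist s t ^ α * dyadicDist s' t' ^ α
        ≤ ((2:ℝ) ^ (-(j:ℤ))) ^ α * ((2:ℝ) ^ (-(j':ℤ))) ^ α :=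
      mul_le_mul d1 d2 hn2 hn3
    calc C * (dyadicDist s t ^ α * dyadicDist s' t' ^ α)
        ≤ C * (((2:ℝ) ^ (-(j:ℤ))) ^ α * ((2:ℝ) ^ (-(j':ℤ))) ^ α) :=
          mul_le_mul_of_nonneg_left hmul hC.le
      _ = M := by rw [hM]; ring
  -- integrability
  have hAA' : IntegrableOn (Function.uncurry f) (A ×ˢ A') :=
    hint.mono_set (Set.prod_mono hA01 hA'01)
  have hAB' : IntegrableOn (Function.uncurry f) (A ×ˢ B') :=
    hAA'.mono_set (Set.prod_mono Set.Subset.rfl hB'A')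
  have hp1 : Integrable (Function.uncurry f) ((volume.restrict A).prod (volume.restrict A')) := by
    rw [Measure.prod_restrict]; exact hAA'
  have hp2 : Integrable (Function.uncurry f) ((volume.restrict A).prod (volume.restrict B')) := by
    rw [Measure.prod_restrict]; exact hAB'
  have hg1 : IntegrableOn (fun t => ∫ t' in B', f t t') A := by
    exact hp2.integral_prod_left
  have hg2 : IntegrableOn (fun t => ∫ t' in A', f t t') A := by
    exact hp1.integral_prod_left
  set u : ℝ → ℝ := fun t =>
    (2:ℝ)^(j'+1) * (∫ t' in B', f t t') - (2:ℝ)^j' * ∫ t' in A', f t t' with hu_def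
  have hu : IntegrableOn u A := (hg1.const_mul _).sub (hg2.const_mul _)
  -- the a.e. bound
  have hbound : ∀ᵐ s ∂(volume.restrict A), ∀ᵐ t ∂(volume.restrict B), |u t - u s| ≤ M := by
    have hslice : ∀ᵐ s ∂(volume.restrict A),
        Integrable (fun t' => f s t') (volume.restrict A') := by
      simpa [Function.uncurry] using hp1.prod_right_ae
    have hsliceB : ∀ᵐ t ∂(volume.restrict B),
        Integrable (fun t' => f t t') (volume.restrict A') :=
      ae_restrict_of_ae_restrict_of_subset hBA hslice
    filter_upwards [hslice, ae_restrict_mem hAm] with s hsInt hsA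
    filter_upwards [hsliceB, ae_restrict_mem hBm] with t htInt htB
    have hw : IntegrableOn (fun t' => f t t' - f s t') A' := htInt.sub hsInt
    have hut : u t - u s = (2:ℝ)^(j'+1) * (∫ t' in B', (f t t' - f s t'))
        - (2:ℝ)^j' * ∫ t' in A', (f t t' - f s t') := by
      rw [hu_def]
      rw [integral_sub (htInt.mono_measure (Measure.restrict_mono hB'A' le_rfl)) (hsInt.mono_measure (Measure.restrict_mono hB'A' le_rfl)),
        integral_sub htInt hsInt]
      ring
    rw [hut]
    refine oneDim (cA := (2:ℝ)^j') (cB := (2:ℝ)^(j'+1)) hA'm hB'm hB'A' (by positivity) (by positivity)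
      (by rw [hA']; exact volume_dyadicInterval_ne_top _ _)
      (by rw [hA']; exact two_pow_mul_volume _ _)
      (by rw [hB']; exact two_pow_mul_volume _ _) hw hMnn ?_
    filter_upwards [ae_restrict_mem hA'm] with s' hs'A'
    filter_upwards [ae_restrict_mem hB'm] with t' ht'B'
    have : (f t t' - f s t') - (f t s' - f s s') = f t t' - f s t' - f t s' + f s s' := by ring
    rw [this]
    exact hsecond s hsA t (hBA htB) s' hs'A' t' (hB'A' ht'B')
  -- conclude
  have i2A : ∫ t in A, u t = (∫ t in A, (2:ℝ)^(j'+1) * (∫ t' in B', f t t'))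
      - ∫ t in A, (2:ℝ)^j' * ∫ t' in A', f t t' := by
    rw [hu_def]; exact integral_sub (hg1.const_mul _) (hg2.const_mul _)
  have i2B : ∫ t in B, u t = (∫ t in B, (2:ℝ)^(j'+1) * (∫ t' in B', f t t'))
      - ∫ t in B, (2:ℝ)^j' * ∫ t' in A', f t t' := by
    rw [hu_def]
    exact integral_sub (IntegrableOn.mono_set (hg1.const_mul _) hBA)
      (IntegrableOn.mono_set (hg2.const_mul _) hBA)
  have hmd : mixedDiff j j' f x x' = (2:ℝ)^(j+1) * (∫ t in B, u t) - (2:ℝ)^j * ∫ t in A, u t := by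
    simp only [mixedDiff, avg2, avgFst, avgSnd, dyadicAvg, ← hA, ← hB, ← hA', ← hB']
    rw [i2A, i2B]; ring
  rw [hmd]
  have h := oneDim (cA := (2:ℝ)^j) (cB := (2:ℝ)^(j+1)) (M := M) hAm hBm hBA (by positivity) (by positivity)
    (by rw [hA]; exact volume_dyadicInterval_ne_top _ _)
    (by rw [hA]; exact two_pow_mul_volume _ _)
    (by rw [hB]; exact two_pow_mul_volume _ _) hu hMnn hbound
  rw [hM] at h
  exact h

/-- For `f` integrable and mixed `α`-Hölder with constant `C`, the mixed
martingale difference satisfies `|(Δ_j Δ'_{j'} f)(x,x')| ≤ C 2^{-αj} 2^{-αj'}`. -/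
theorem mixedDiff_bound
    (α C : ℝ) (hα : 0 < α) (hC : 0 < C)
    (f : ℝ → ℝ → ℝ)
    (hint : MeasureTheory.IntegrableOn (Function.uncurry f)
      (Set.Ioc (0:ℝ) 1 ×ˢ Set.Ioc (0:ℝ) 1))
    (hf : MixedHolderDyadic α C f)
    (j j' : ℕ) (x x' : ℝ) (hx : x ∈ Set.Ioc (0:ℝ) 1) (hx' : x' ∈ Set.Ioc (0:ℝ) 1) :
    |mixedDiff j j' f x x'| ≤ C * (2:ℝ) ^ (-(α * (j:ℝ))) * (2:ℝ) ^ (-(α * (j':ℝ))) := by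
  rw [← zpow_rpow_eq j α, ← zpow_rpow_eq j' α]
  exact mixedDiff_bound_core α C hα hC f hint hf j j' x x' hx hx'
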